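/- The operator T satisfies the two defining properties of the quantum Weyl group reflection element: (i) if λ ≥ 0 and v ∈ V_λ satisfies E v = 0, then T v = F^{(λ)} v; and (ii) for every λ ≥ 0 and every v ∈ V_{λ+2}, one has T(F v) = −q^{λ+2} · E(T v). -/

import Mathlib

/-!
Statement 0: The operator `T v = Σ_s (−1)^s q^s F^{(λ+s)} E^{(s)} v` (for `v` of weight `λ ≥ 0`)
satisfies the two defining properties of the quantum Weyl group reflection element:
(i) if `λ ≥ 0` and `E v = 0` then `T v = F^{(λ)} v`;
(ii) for `λ ≥ 0` and `v ∈ V_{λ+2}` one has `T (F v) = −q^{λ+2} • E (T v)`.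
-/

noncomputable section

/-- The quantum integer `[n]_q = q^{n-1} + q^{n-3} + ⋯ + q^{-(n-1)}` for `n : ℕ`. -/
def qintN {𝕜 : Type*} [Field 𝕜] (q : 𝕜) (n : ℕ) : 𝕜 :=
  ∑ j ∈ Finset.range n, q ^ ((n : ℤ) - 1 - 2 * (j : ℤ))

/-- The quantum integer `[m]_q` for `m : ℤ`, with `[-m]_q = -[m]_q`. -/
def qintZ {𝕜 : Type*} [Field 𝕜] (q : 𝕜) (m : ℤ) : 𝕜 :=
  if 0 ≤ m then qintN q m.toNat else - qintN q (-m).toNat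

/-- The quantum factorial `[n]_q! = [1]_q [2]_q ⋯ [n]_q`. -/
def qfact {𝕜 : Type*} [Field 𝕜] (q : 𝕜) (n : ℕ) : 𝕜 :=
  ∏ i ∈ Finset.range n, qintN q (i + 1)

section scalars
variable {𝕜 : Type*} [Field 𝕜] (q : 𝕜) (hq : q ≠ 0)
lemma qintN_zero : qintN q 0 = 0 := by simp [qintN]

lemma qintN_one : qintN q 1 = 1 := by simp [qintN]

lemma qintZ_natCast (n : ℕ) : qintZ q (n : ℤ) = qintN q n := by
  simp [qintZ]

lemma qintZ_neg (m : ℤ) : qintZ q (-m) = - qintZ q m := by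
  rcases lt_trichotomy m 0 with h | h | h
  · have h1 : (0:ℤ) ≤ -m := by omega
    have h2 : ¬ (0:ℤ) ≤ m := by omega
    simp [qintZ, h1, h2]
    intro h'; omega
  · simp [h, qintZ, qintN]
  · have h1 : ¬ (0:ℤ) ≤ -m := by omega
    have h2 : (0:ℤ) ≤ m := by omega
    simp [qintZ, h1, h2]
    intro h'; omega

include hq

lemma zp_mul (a b c : ℤ) (h : a + b = c) : q ^ a * q ^ b = q ^ c := by
  rw [← h, zpow_add₀ hq]

lemma zp_q_mul (a b : ℤ) (h : a + 1 = b) : q * q ^ a = q ^ b := by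
  rw [← h, zpow_add_one₀ hq, mul_comm]

lemma qintN_rec1 (n : ℕ) : qintN q (n + 1) = q * qintN q n + q ^ (-(n:ℤ)) := by
  unfold qintN
  rw [Finset.sum_range_succ, Finset.mul_sum]
  congr 1
  · apply Finset.sum_congr rfl
    intro j hj
    rw [zp_q_mul q hq ((n:ℤ) - 1 - 2*(j:ℤ)) (((n+1:ℕ):ℤ) - 1 - 2*(j:ℤ)) (by push_cast; ring)]
  · congr 1; push_cast; ring

lemma qintN_rec2 (n : ℕ) : q * qintN q (n + 1) = qintN q n + q ^ ((n:ℤ) + 1) := by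
  unfold qintN
  rw [Finset.mul_sum, Finset.sum_range_succ']
  congr 1
  · apply Finset.sum_congr rfl
    intro j hj
    rw [zp_q_mul q hq (((n+1:ℕ):ℤ) - 1 - 2*((j+1:ℕ):ℤ)) ((n:ℤ) - 1 - 2*(j:ℤ)) (by push_cast; ring)]
  · rw [zp_q_mul q hq (((n+1:ℕ):ℤ) - 1 - 2*((0:ℕ):ℤ)) ((n:ℤ)+1) (by push_cast; ring)]

lemma qintZ_succ (m : ℤ) : qintZ q (m + 1) = q * qintZ q m + q ^ (-m) := by
  obtain ⟨n⟩ | ⟨n⟩ := m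
  · have e1 : Int.ofNat n = (n:ℤ) := rfl
    rw [e1, show ((n:ℤ) + 1) = ((n+1:ℕ):ℤ) by push_cast; ring, qintZ_natCast, qintZ_natCast,
      qintN_rec1 q hq]
  · rw [Int.negSucc_eq, show (-((n:ℤ)+1) + 1) = -(n:ℤ) by ring, qintZ_neg, qintZ_neg,
      show (-(-((n:ℤ)+1))) = ((n:ℤ)+1) by ring, qintZ_natCast,
      show ((n:ℤ)+1) = ((n+1:ℕ):ℤ) by push_cast; ring, qintZ_natCast]
    have h := qintN_rec2 q hq n
    rw [show ((n:ℤ)+1) = ((n+1:ℕ):ℤ) by push_cast; ring] at h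
    linear_combination h

lemma qintZ_succ₂ (m : ℤ) : q * qintZ q (m + 1) = qintZ q m + q ^ (m + 1) := by
  have h := qintZ_succ q hq (-(m+1))
  rw [show (-(m+1) + 1) = -m by ring, qintZ_neg, qintZ_neg,
    show (-(-(m+1))) = m + 1 by ring] at h
  linear_combination h

lemma qintZ_pred₂ (m : ℤ) : qintZ q (m - 1) = q * qintZ q m - q ^ m := by
  have h := qintZ_succ₂ q hq (m - 1)
  rw [sub_add_cancel] at h
  linear_combination -h

lemma qintZ_zero : qintZ q 0 = 0 := by simp [qintZ, qintN]

lemma qintZ_one : qintZ q 1 = 1 := by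
  rw [show (1:ℤ) = ((1:ℕ):ℤ) by norm_num, qintZ_natCast, qintN_one]

/-- `(q - q⁻¹)[m] = q^m - q^{-m}`. -/
lemma qintZ_key (m : ℤ) : (q - q ^ (-1:ℤ)) * qintZ q m = q ^ m - q ^ (-m) := by
  induction m using Int.induction_on with
  | zero => rw [qintZ_zero q hq]; simp
  | succ n ih =>
    rw [qintZ_succ q hq n]
    have p1 : q * q ^ (n:ℤ) = q ^ ((n:ℤ)+1) := zp_q_mul q hq _ _ rfl
    have p2 : q ^ (-1:ℤ) * q ^ (-(n:ℤ)) = q ^ (-((n:ℤ)+1)) := zp_mul q hq _ _ _ (by ring)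
    linear_combination q * ih + p1 - p2
  | pred n ih =>
    rw [show (-(-(n:ℤ))) = (n:ℤ) by ring] at ih
    rw [show (-(n:ℤ) - 1) = (-(n:ℤ)) - 1 by ring, qintZ_pred₂ q hq (-(n:ℤ)),
      show (-(-(n:ℤ) - 1)) = (n:ℤ) + 1 by ring]
    have p4 : q ^ (-1:ℤ) * q ^ (-(n:ℤ)) = q ^ (-(n:ℤ)-1) := zp_mul q hq _ _ _ (by ring)
    have p5 : q * q ^ ((n:ℤ)) = q ^ ((n:ℤ)+1) := zp_q_mul q hq _ _ rfl
    linear_combination q * ih + p4 - p5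

lemma qintZ_addN (b : ℕ) (a : ℤ) :
    qintZ q (a + b) = q ^ (b:ℤ) * qintZ q a + q ^ (-a) * qintZ q (b:ℤ) := by
  induction b with
  | zero => simp [qintZ_zero q hq]
  | succ b ih =>
    have p1 : q * q ^ (b:ℤ) = q ^ ((b:ℤ)+1) := zp_q_mul q hq _ _ rfl
    have p2 : q ^ (-a) * q ^ (-(b:ℤ)) = q ^ (-(a+(b:ℤ))) := zp_mul q hq _ _ _ (by ring)
    rw [show ((b+1:ℕ):ℤ) = (b:ℤ)+1 by push_cast; ring,
      show a + ((b:ℤ)+1) = (a + (b:ℤ)) + 1 by ring,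
      qintZ_succ q hq (a + (b:ℤ)), ih, qintZ_succ q hq (b:ℤ)]
    linear_combination qintZ q a * p1 - p2

lemma qintZ_add (a b : ℤ) :
    qintZ q (a + b) = q ^ b * qintZ q a + q ^ (-a) * qintZ q b := by
  rcases le_or_gt 0 b with hb | hb
  · obtain ⟨n, rfl⟩ : ∃ n : ℕ, b = (n:ℤ) := ⟨b.toNat, by omega⟩
    exact qintZ_addN q hq n a
  · obtain ⟨n, rfl⟩ : ∃ n : ℕ, b = -(n:ℤ) := ⟨(-b).toNat, by omega⟩
    have h := qintZ_addN q hq n (a - n)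
    rw [show a - (n:ℤ) + (n:ℤ) = a by ring] at h
    have p1 : q ^ (-(n:ℤ)) * q ^ ((n:ℤ)) = 1 := by
      have := zp_mul q hq (-(n:ℤ)) ((n:ℤ)) 0 (by ring)
      rwa [zpow_zero] at this
    have p2 : q ^ (-(n:ℤ)) * q ^ (-(a - (n:ℤ))) = q ^ (-a) := zp_mul q hq _ _ _ (by ring)
    rw [qintZ_neg q (n:ℤ), show a + -(n:ℤ) = a - (n:ℤ) by ring]
    linear_combination -(q ^ (-(n:ℤ))) * h - qintZ q (a - (n:ℤ)) * p1 - qintZ q (n:ℤ) * p2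

/-- descending sum: `∑_{i<n} [m-2i] = [n][m-n+1]` -/
lemma sum_qint_desc (n : ℕ) (m : ℤ) :
    ∑ i ∈ Finset.range n, qintZ q (m - 2*(i:ℤ)) = qintZ q (n:ℤ) * qintZ q (m - n + 1) := by
  induction n with
  | zero => simp [qintZ_zero q hq]
  | succ n ih =>
    rw [Finset.sum_range_succ, ih]
    have hK := qintZ_add q hq (m - n) (-(n:ℤ))
    rw [show m - (n:ℤ) + -(n:ℤ) = m - 2*(n:ℤ) by ring, qintZ_neg q (n:ℤ)] at hK
    have hs1 := qintZ_succ q hq (m - n)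
    have hs2 := qintZ_succ q hq (n:ℤ)
    rw [show ((n+1:ℕ):ℤ) = (n:ℤ)+1 by push_cast; ring,
      show m - ((n:ℤ)+1) + 1 = m - (n:ℤ) by ring,
      hK, hs2]
    rw [show m - (n:ℤ) + 1 = (m - (n:ℤ)) + 1 by ring, hs1] at ih ⊢
    ring

/-- ascending sum: `∑_{i<n} [m+2i] = [n][m+n-1]` -/
lemma sum_qint_asc (n : ℕ) (m : ℤ) :
    ∑ i ∈ Finset.range n, qintZ q (m + 2*(i:ℤ)) = qintZ q (n:ℤ) * qintZ q (m + n - 1) := by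
  induction n with
  | zero => simp [qintZ_zero q hq]
  | succ n ih =>
    rw [Finset.sum_range_succ, ih]
    have hK := qintZ_add q hq (m + n) (n:ℤ)
    rw [show m + (n:ℤ) + (n:ℤ) = m + 2*(n:ℤ) by ring] at hK
    have hp := qintZ_pred₂ q hq (m + n)
    have hs2 := qintZ_succ q hq (n:ℤ)
    have hL1 := qintZ_key q hq (m + n)
    have hL2 := qintZ_key q hq (n:ℤ)
    rw [show ((n+1:ℕ):ℤ) = (n:ℤ)+1 by push_cast; ring,
      show m + ((n:ℤ)+1) - 1 = m + (n:ℤ) by ring,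
      hK, hs2, show m + (n:ℤ) - 1 = (m + (n:ℤ)) - 1 by ring, hp]
    linear_combination qintZ q (n:ℤ) * hL1 - qintZ q (m + (n:ℤ)) * hL2

omit hq in
lemma qfact_zero : qfact q 0 = 1 := by simp [qfact]

omit hq in
lemma qfact_succ (n : ℕ) : qfact q (n+1) = qfact q n * qintN q (n+1) :=
  Finset.prod_range_succ _ n

lemma qintN_rec2' (n : ℕ) : q * qintN q (n+1) = qintN q n + q ^ (n+1) := by
  have h := qintN_rec2 q hq n
  rwa [show ((n:ℤ)+1) = ((n+1:ℕ):ℤ) by push_cast; ring, zpow_natCast] at h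

omit hq in
lemma qfact_ne_zero (hqint : ∀ n : ℕ, 1 ≤ n → qintN q n ≠ 0) (n : ℕ) : qfact q n ≠ 0 := by
  induction n with
  | zero => rw [qfact_zero]; exact one_ne_zero
  | succ n ih => rw [qfact_succ]; exact mul_ne_zero ih (hqint (n+1) (by omega))

omit hq in
/-- coefficient identity for the left-hand side -/
lemma coef1 (hqint : ∀ n : ℕ, 1 ≤ n → qintN q n ≠ 0) (hq : q ≠ 0) (lam s : ℕ) :
    ((-1:𝕜)^s * q^s) * ((qfact q (lam+s))⁻¹ * (qfact q s)⁻¹)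
      + (((-1:𝕜)^(s+1) * q^(s+1)) * ((qfact q (lam+s+1))⁻¹ * (qfact q (s+1))⁻¹))
        * (qintN q (s+1) * qintN q (lam+s+2))
    = (-(q^(lam+2))) * (((-1:𝕜)^s * q^(2*s)) * ((qfact q (lam+1+s))⁻¹ * (qfact q s)⁻¹)) := by
  have h1 : qfact q (lam+s+1) = qfact q (lam+s) * qintN q (lam+s+1) := qfact_succ q _
  have h2 : qfact q (s+1) = qfact q s * qintN q (s+1) := qfact_succ q _
  have key : q * qintN q (lam+s+2) = qintN q (lam+s+1) + q ^ (lam+s+2) :=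
    qintN_rec2' q hq (lam+s+1)
  have n1 : qfact q (lam+s) ≠ 0 := qfact_ne_zero q hqint _
  have n2 : qfact q s ≠ 0 := qfact_ne_zero q hqint _
  have n3 : qintN q (lam+s+1) ≠ 0 := hqint _ (by omega)
  have n4 : qintN q (s+1) ≠ 0 := hqint _ (by omega)
  have invx := mul_inv_cancel₀ n3
  have invz := mul_inv_cancel₀ n4
  rw [show lam+1+s = lam+s+1 by omega, h1, h2]
  simp only [mul_inv]
  linear_combination (-((-1:𝕜)^s) * q^s * (qfact q (lam+s))⁻¹ * (qfact q s)⁻¹ * (qintN q (lam+s+1))⁻¹) * key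
    - ((-1:𝕜)^s * q^s * (qfact q (lam+s))⁻¹ * (qfact q s)⁻¹) * invx
    - ((-1:𝕜)^s * q^(s+1) * (qfact q (lam+s))⁻¹ * (qfact q s)⁻¹ * (qintN q (lam+s+1))⁻¹ * qintN q (lam+s+2)) * invz

omit hq in
/-- coefficient identity for the right-hand side, `s = 0` case -/
lemma coef2 (hqint : ∀ n : ℕ, 1 ≤ n → qintN q n ≠ 0) (hq : q ≠ 0) (lam : ℕ) :
    ((-1:𝕜)^0 * q^(2*0)) * ((qfact q (lam+1+0))⁻¹ * (qfact q 0)⁻¹)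
    = (((-1:𝕜)^0 * q^0) * ((qfact q (lam+2+0))⁻¹ * (qfact q 0)⁻¹))
        * (qintN q (lam+2+0) * qintN q (0+1)) := by
  have h1 : qfact q (lam+2) = qfact q (lam+1) * qintN q (lam+2) := qfact_succ q _
  have n1 : qfact q (lam+1) ≠ 0 := qfact_ne_zero q hqint _
  have n3 : qintN q (lam+2) ≠ 0 := hqint _ (by omega)
  simp only [show lam+1+0 = lam+1 by omega, show lam+2+0 = lam+2 by omega,
    show (0:ℕ)+1 = 1 by omega, qintN_one q, qfact_zero q]
  rw [h1]
  field_simp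
  simp

omit hq in
/-- coefficient identity for the right-hand side, successor case -/
lemma coef3 (hqint : ∀ n : ℕ, 1 ≤ n → qintN q n ≠ 0) (hq : q ≠ 0) (lam s : ℕ) :
    ((-1:𝕜)^(s+1) * q^(2*(s+1))) * ((qfact q (lam+1+(s+1)))⁻¹ * (qfact q (s+1))⁻¹)
    = ((-1:𝕜)^s * q^s) * ((qfact q (lam+2+s))⁻¹ * (qfact q s)⁻¹)
      + (((-1:𝕜)^(s+1) * q^(s+1)) * ((qfact q (lam+2+(s+1)))⁻¹ * (qfact q (s+1))⁻¹))
          * (qintN q (lam+2+(s+1)) * qintN q (s+2)) := by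
  have h1 : qfact q (lam+s+3) = qfact q (lam+s+2) * qintN q (lam+s+3) := qfact_succ q _
  have h2 : qfact q (s+1) = qfact q s * qintN q (s+1) := qfact_succ q _
  have key : q * qintN q (s+2) = qintN q (s+1) + q ^ (s+2) := qintN_rec2' q hq (s+1)
  have n1 : qfact q (lam+s+2) ≠ 0 := qfact_ne_zero q hqint _
  have n2 : qfact q s ≠ 0 := qfact_ne_zero q hqint _
  have n3 : qintN q (lam+s+3) ≠ 0 := hqint _ (by omega)
  have n4 : qintN q (s+1) ≠ 0 := hqint _ (by omega)
  have invx := mul_inv_cancel₀ n4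
  have invz := mul_inv_cancel₀ n3
  rw [show lam+1+(s+1) = lam+s+2 by omega, show lam+2+(s+1) = lam+s+3 by omega,
    show lam+2+s = lam+s+2 by omega, show s+2 = s+1+1 by omega, h1, h2]
  simp only [mul_inv]
  linear_combination ((-1:𝕜)^s * q^s * (qfact q (lam+s+2))⁻¹ * (qfact q s)⁻¹ * (qintN q (s+1))⁻¹) * key
    + ((-1:𝕜)^s * q^s * (qfact q (lam+s+2))⁻¹ * (qfact q s)⁻¹) * invx
    + ((-1:𝕜)^s * q^(s+1) * (qfact q (lam+s+2))⁻¹ * (qfact q s)⁻¹ * (qintN q (s+1))⁻¹ * qintN q (s+1+1)) * invz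

end scalars

section moduleside
variable {𝕜 V : Type*} [Field 𝕜] [AddCommGroup V] [Module 𝕜 V]
  (q : 𝕜) (Vw : ℤ → Submodule 𝕜 V) (E F : Module.End 𝕜 V)

lemma Epow_mem (hE : ∀ μ : ℤ, ∀ v ∈ Vw μ, E v ∈ Vw (μ + 2)) :
    ∀ (s : ℕ) (μ : ℤ), ∀ v ∈ Vw μ, (E ^ s) v ∈ Vw (μ + 2 * s) := by
  intro s
  induction s with
  | zero => intro μ v hv; simpa using hv
  | succ s ih =>
    intro μ v hv
    have h1 : (E ^ (s+1)) v = E ((E ^ s) v) := by rw [pow_succ', Module.End.mul_apply]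
    have h2 : μ + 2 * ((s:ℤ)+1) = (μ + 2 * s) + 2 := by ring
    rw [h1, show ((s+1:ℕ):ℤ) = (s:ℤ)+1 by push_cast; ring, h2]
    exact hE _ _ (ih μ v hv)

lemma comm_EpowF
    (hE : ∀ μ : ℤ, ∀ v ∈ Vw μ, E v ∈ Vw (μ + 2))
    (hEF : ∀ μ : ℤ, ∀ v ∈ Vw μ, E (F v) - F (E v) = qintZ q μ • v) :
    ∀ (s : ℕ) (μ : ℤ), ∀ v ∈ Vw μ,
      (E ^ (s+1)) (F v) = F ((E ^ (s+1)) v)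
        + (∑ i ∈ Finset.range (s+1), qintZ q (μ + 2*(i:ℤ))) • (E ^ s) v := by
  intro s
  induction s with
  | zero =>
    intro μ v hv
    have h := hEF μ v hv
    simp only [zero_add, pow_one, pow_zero, Module.End.one_apply, Finset.range_one,
      Finset.sum_singleton, Nat.cast_zero, mul_zero, add_zero]
    linear_combination (norm := module) h
  | succ s ih =>
    intro μ v hv
    have hup : ∀ (x : V), (E ^ (s+2)) x = E ((E ^ (s+1)) x) := by
      intro x; rw [pow_succ', Module.End.mul_apply]
    have hw : (E ^ (s+1)) v ∈ Vw (μ + 2*((s:ℤ)+1)) := by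
      have := Epow_mem Vw E hE (s+1) μ v hv
      rwa [show ((s+1:ℕ):ℤ) = (s:ℤ)+1 by push_cast; ring] at this
    have h2 := hEF _ _ hw
    have h3 : E ((E ^ s) v) = (E ^ (s+1)) v := by rw [pow_succ', Module.End.mul_apply]
    have hRsum : ∑ i ∈ Finset.range (s+1+1), qintZ q (μ + 2*(i:ℤ))
        = (∑ i ∈ Finset.range (s+1), qintZ q (μ + 2*(i:ℤ))) + qintZ q (μ + 2*((s:ℤ)+1)) := by
      rw [Finset.sum_range_succ (fun i => qintZ q (μ + 2*(i:ℤ))) (s+1),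
        show (((s+1:ℕ)):ℤ) = (s:ℤ)+1 by push_cast; ring]
    rw [hup (F v), ih μ v hv, map_add, map_smul, h3, hup v, hRsum]
    linear_combination (norm := module) h2

lemma comm_EFpow
    (hF : ∀ μ : ℤ, ∀ v ∈ Vw μ, F v ∈ Vw (μ - 2))
    (hEF : ∀ μ : ℤ, ∀ v ∈ Vw μ, E (F v) - F (E v) = qintZ q μ • v) :
    ∀ (n : ℕ) (μ : ℤ), ∀ v ∈ Vw μ,
      E ((F ^ (n+1)) v) = (F ^ (n+1)) (E v)
        + (∑ i ∈ Finset.range (n+1), qintZ q (μ - 2*(i:ℤ))) • (F ^ n) v := by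
  intro n
  induction n with
  | zero =>
    intro μ v hv
    have h := hEF μ v hv
    simp only [zero_add, pow_one, pow_zero, Module.End.one_apply, Finset.range_one,
      Finset.sum_singleton, Nat.cast_zero, mul_zero, sub_zero]
    linear_combination (norm := module) h
  | succ n ih =>
    intro μ v hv
    have hdown : ∀ (x : V), (F ^ (n+2)) x = (F ^ (n+1)) (F x) := by
      intro x; rw [pow_succ, Module.End.mul_apply]
    have hFv : F v ∈ Vw (μ - 2) := hF μ v hv
    have h0 := hEF μ v hv
    have hsum : ∑ i ∈ Finset.range (n+2), qintZ q (μ - 2*(i:ℤ))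
        = (∑ i ∈ Finset.range (n+1), qintZ q ((μ-2) - 2*(i:ℤ))) + qintZ q μ := by
      rw [Finset.sum_range_succ' (fun i => qintZ q (μ - 2*(i:ℤ))) (n+1)]
      congr 1
      · apply Finset.sum_congr rfl
        intro i _
        congr 1
        push_cast; ring
      · congr 1; push_cast; ring
    have h4 : (F ^ n) (F v) = (F ^ (n+1)) v := by rw [pow_succ, Module.End.mul_apply]
    rw [hdown v, ih (μ-2) (F v) hFv, h4, hsum]
    have h5 : (F ^ (n+1)) (E (F v)) = (F ^ (n+1)) (F (E v)) + qintZ q μ • (F ^ (n+1)) v := by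
      have := congrArg (F ^ (n+1)) h0
      rw [map_sub] at this
      rw [← map_smul]
      linear_combination (norm := module) this
    rw [show (F ^ (n+1)) (F (E v)) = (F ^ (n+2)) (E v) from (hdown (E v)).symm] at h5
    rw [h5]
    module

end moduleside

noncomputable section aux
variable {𝕜 : Type*} [Field 𝕜]

/-- coefficient in the expansion of `T lam` -/
def coA (q : 𝕜) (lam s : ℕ) : 𝕜 :=
  ((-1:𝕜)^s * q^s) * ((qfact q (lam+s))⁻¹ * (qfact q s)⁻¹)

/-- coefficient in the expansion of `T (lam+2)` -/
def coB (q : 𝕜) (lam s : ℕ) : 𝕜 :=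
  ((-1:𝕜)^s * q^s) * ((qfact q (lam+2+s))⁻¹ * (qfact q s)⁻¹)

/-- common coefficient -/
def coD (q : 𝕜) (lam s : ℕ) : 𝕜 :=
  ((-1:𝕜)^s * q^(2*s)) * ((qfact q (lam+1+s))⁻¹ * (qfact q s)⁻¹)

variable (q : 𝕜) (hqint : ∀ n : ℕ, 1 ≤ n → qintN q n ≠ 0) (hq : q ≠ 0)
include hqint hq

lemma coef1' (lam s : ℕ) :
    coA q lam s + coA q lam (s+1) * (qintN q (s+1) * qintN q (lam+s+2))
      = (-(q^(lam+2))) * coD q lam s := by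
  unfold coA coD
  rw [show lam+(s+1) = lam+s+1 by omega]
  exact coef1 q hqint hq lam s

lemma coef2' (lam : ℕ) :
    coD q lam 0 = coB q lam 0 * (qintN q (lam+2+0) * qintN q (0+1)) := by
  unfold coB coD
  exact coef2 q hqint hq lam

lemma coef3' (lam s : ℕ) :
    coD q lam (s+1)
      = coB q lam s + coB q lam (s+1) * (qintN q (lam+2+(s+1)) * qintN q (s+1+1)) := by
  unfold coB coD
  rw [show s+1+1 = s+2 by omega]
  exact coef3 q hqint hq lam s

end aux


theorem reflection_element_properties
    {𝕜 V : Type*} [Field 𝕜] [AddCommGroup V] [Module 𝕜 V]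
    (q : 𝕜) (hq : q ≠ 0) (hqint : ∀ n : ℕ, 1 ≤ n → qintN q n ≠ 0)
    -- weight decomposition
    (Vw : ℤ → Submodule 𝕜 V) (hdec : DirectSum.IsInternal Vw)
    (N : ℕ) (hN : ∀ μ : ℤ, (N : ℤ) < |μ| → Vw μ = ⊥)
    -- the `sl₂` action
    (E F : Module.End 𝕜 V)
    (hE : ∀ μ : ℤ, ∀ v ∈ Vw μ, E v ∈ Vw (μ + 2))
    (hF : ∀ μ : ℤ, ∀ v ∈ Vw μ, F v ∈ Vw (μ - 2))
    (hEF : ∀ μ : ℤ, ∀ v ∈ Vw μ, E (F v) - F (E v) = qintZ q μ • v)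
    -- the operator `T`, defined on each nonnegative weight space `V_λ` by
    -- `T v = Σ_s (−1)^s q^s F^{(λ+s)} E^{(s)} v` (the sum is finite: it stops at `s = N`)
    (T : ℕ → V → V)
    (hT : ∀ (lam : ℕ) (v : V), T lam v =
      ∑ s ∈ Finset.range (N + 1),
        ((-1 : 𝕜) ^ s * q ^ s) •
          ((qfact q (lam + s))⁻¹ • (F ^ (lam + s)) ((qfact q s)⁻¹ • (E ^ s) v))) :
    -- (i) highest weight vectors: `T v = F^{(λ)} v`
    (∀ lam : ℕ, ∀ v ∈ Vw (lam : ℤ), E v = 0 →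
        T lam v = (qfact q lam)⁻¹ • (F ^ lam) v) ∧
    -- (ii) `T (F v) = −q^{λ+2} • E (T v)` for `v` of weight `λ + 2`
    (∀ lam : ℕ, ∀ v ∈ Vw ((lam : ℤ) + 2),
        T lam (F v) = (-(q ^ (lam + 2))) • E (T (lam + 2) v)) := by
  have hFF : ∀ (k:ℕ) (x:V), (F ^ (k+1)) x = (F ^ k) (F x) := fun k x => by
    rw [pow_succ, Module.End.mul_apply]
  have hEE : ∀ (k:ℕ) (x:V), (E ^ (k+1)) x = E ((E ^ k) x) := fun k x => by
    rw [pow_succ', Module.End.mul_apply]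
  constructor
  · -- part (i)
    intro lam v hv hEv
    rw [hT]
    rw [Finset.sum_range_succ'
      (fun s => ((-1:𝕜)^s * q^s) •
        ((qfact q (lam+s))⁻¹ • (F ^ (lam+s)) ((qfact q s)⁻¹ • (E ^ s) v))) N]
    have hzero : ∀ s : ℕ, (E ^ (s+1)) v = 0 := by
      intro s
      rw [pow_succ, Module.End.mul_apply, hEv, map_zero]
    have h1 : ∀ s ∈ Finset.range N,
        ((-1:𝕜)^(s+1) * q^(s+1)) •
          ((qfact q (lam+(s+1)))⁻¹ • (F ^ (lam+(s+1))) ((qfact q (s+1))⁻¹ • (E ^ (s+1)) v))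
        = 0 := by
      intro s _
      rw [hzero s]
      simp
    rw [Finset.sum_congr rfl h1, Finset.sum_const_zero, zero_add]
    simp [qfact_zero q]
  · -- part (ii)
    intro lam v hv
    -- vanishing of high E-powers
    have hEN : (E ^ N) v = 0 := by
      have hmem := Epow_mem Vw E hE N ((lam:ℤ)+2) v hv
      have habs : (N:ℤ) < |(lam:ℤ)+2 + 2*(N:ℤ)| := by
        rw [abs_of_nonneg (by positivity)]
        omega
      rw [hN _ habs] at hmem
      simpa using hmem
    have hEN1 : (E ^ (N+1)) v = 0 := by
      rw [hEE N v, hEN, map_zero]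
    -- closed forms of the commutator sums
    have hsumA : ∀ s : ℕ, (∑ i ∈ Finset.range (s+1), qintZ q (((lam:ℤ)+2) + 2*(i:ℤ)))
        = qintN q (s+1) * qintN q (lam+s+2) := by
      intro s
      rw [sum_qint_asc q hq (s+1) ((lam:ℤ)+2),
        show (lam:ℤ)+2+((s+1:ℕ):ℤ)-1 = ((lam+s+2:ℕ):ℤ) by push_cast; ring,
        qintZ_natCast, qintZ_natCast]
    have hsumB : ∀ s : ℕ,
        (∑ i ∈ Finset.range (lam+2+s), qintZ q ((lam:ℤ)+2+2*(s:ℤ) - 2*(i:ℤ)))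
        = qintN q (lam+2+s) * qintN q (s+1) := by
      intro s
      rw [sum_qint_desc q hq (lam+2+s) ((lam:ℤ)+2+2*(s:ℤ)),
        show (lam:ℤ)+2+2*(s:ℤ) - ((lam+2+s:ℕ):ℤ) + 1 = ((s+1:ℕ):ℤ) by push_cast; ring,
        qintZ_natCast, qintZ_natCast]
    -- LHS claim
    have claimL : T lam (F v)
        = ∑ s ∈ Finset.range (N+1),
            ((-(q^(lam+2))) * coD q lam s) • ((F ^ (lam+1+s)) ((E ^ s) v)) := by
      rw [hT lam (F v)]
      calc
        ∑ s ∈ Finset.range (N + 1),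
            ((-1 : 𝕜) ^ s * q ^ s) •
              ((qfact q (lam + s))⁻¹ • (F ^ (lam + s)) ((qfact q s)⁻¹ • (E ^ s) (F v)))
            = ∑ s ∈ Finset.range (N+1), coA q lam s • (F ^ (lam+s)) ((E ^ s) (F v)) := by
              refine Finset.sum_congr rfl fun s _ => ?_
              rw [map_smul, smul_smul, smul_smul]
              congr 1
              unfold coA; ring
        _ = (∑ s ∈ Finset.range N, coA q lam (s+1) • (F ^ (lam+(s+1))) ((E ^ (s+1)) (F v)))
              + coA q lam 0 • (F ^ (lam+0)) ((E ^ 0) (F v)) :=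
            Finset.sum_range_succ' _ N
        _ = (∑ s ∈ Finset.range N,
              (coA q lam (s+1) • ((F ^ (lam+1+(s+1))) ((E ^ (s+1)) v))
                + (coA q lam (s+1) * (qintN q (s+1) * qintN q (lam+s+2))) •
                    ((F ^ (lam+1+s)) ((E ^ s) v))))
              + coA q lam 0 • ((F ^ (lam+1+0)) ((E ^ 0) v)) := by
            congr 1
            · refine Finset.sum_congr rfl fun s _ => ?_
              rw [comm_EpowF q Vw E F hE hEF s ((lam:ℤ)+2) v hv, hsumA s,
                map_add, map_smul, smul_add, smul_smul,
                show lam+1+(s+1) = lam+(s+1)+1 by omega,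
                show lam+1+s = lam+(s+1) by omega,
                hFF (lam+(s+1)) ((E ^ (s+1)) v)]
        _ = ((∑ s ∈ Finset.range N, coA q lam (s+1) • ((F ^ (lam+1+(s+1))) ((E ^ (s+1)) v)))
              + coA q lam 0 • ((F ^ (lam+1+0)) ((E ^ 0) v)))
              + (∑ s ∈ Finset.range N,
                  (coA q lam (s+1) * (qintN q (s+1) * qintN q (lam+s+2))) •
                    ((F ^ (lam+1+s)) ((E ^ s) v))) := by
            rw [Finset.sum_add_distrib]
            abel
        _ = (∑ s ∈ Finset.range (N+1), coA q lam s • ((F ^ (lam+1+s)) ((E ^ s) v)))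
              + (∑ s ∈ Finset.range (N+1),
                  (coA q lam (s+1) * (qintN q (s+1) * qintN q (lam+s+2))) •
                    ((F ^ (lam+1+s)) ((E ^ s) v))) := by
            congr 1
            · exact (Finset.sum_range_succ'
                (fun s => coA q lam s • ((F ^ (lam+1+s)) ((E ^ s) v))) N).symm
            · rw [Finset.sum_range_succ, hEN, map_zero, smul_zero, add_zero]
        _ = ∑ s ∈ Finset.range (N+1),
              ((-(q^(lam+2))) * coD q lam s) • ((F ^ (lam+1+s)) ((E ^ s) v)) := by
            rw [← Finset.sum_add_distrib]
            refine Finset.sum_congr rfl fun s _ => ?_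
            rw [← add_smul, coef1' q hqint hq lam s]
    -- RHS claim
    have hc2 : ∀ s : ℕ, E ((F ^ (lam+2+s)) ((E ^ s) v))
        = (F ^ (lam+2+s)) ((E ^ (s+1)) v)
          + (qintN q (lam+2+s) * qintN q (s+1)) • (F ^ (lam+1+s)) ((E ^ s) v) := by
      intro s
      have hmem : (E ^ s) v ∈ Vw ((lam:ℤ)+2 + 2*(s:ℤ)) := Epow_mem Vw E hE s ((lam:ℤ)+2) v hv
      have h := comm_EFpow q Vw E F hF hEF (lam+1+s) _ _ hmem
      rw [show lam+1+s+1 = lam+2+s by omega] at h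
      rw [h, hsumB s, ← hEE s v]
    have claimR : E (T (lam+2) v)
        = ∑ s ∈ Finset.range (N+1), coD q lam s • ((F ^ (lam+1+s)) ((E ^ s) v)) := by
      rw [hT (lam+2) v, map_sum]
      calc
        ∑ s ∈ Finset.range (N + 1),
            E (((-1 : 𝕜) ^ s * q ^ s) •
              ((qfact q (lam + 2 + s))⁻¹ • (F ^ (lam + 2 + s)) ((qfact q s)⁻¹ • (E ^ s) v)))
            = ∑ s ∈ Finset.range (N+1),
                (coB q lam s • ((F ^ (lam+2+s)) ((E ^ (s+1)) v))
                  + (coB q lam s * (qintN q (lam+2+s) * qintN q (s+1))) •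
                      ((F ^ (lam+1+s)) ((E ^ s) v))) := by
              refine Finset.sum_congr rfl fun s _ => ?_
              rw [map_smul, map_smul, map_smul, map_smul, smul_smul, smul_smul, hc2 s,
                smul_add, smul_smul]
              congr 2
              · unfold coB; ring
              · unfold coB; ring
        _ = (∑ s ∈ Finset.range (N+1), coB q lam s • ((F ^ (lam+2+s)) ((E ^ (s+1)) v)))
              + ∑ s ∈ Finset.range (N+1),
                  (coB q lam s * (qintN q (lam+2+s) * qintN q (s+1))) •
                    ((F ^ (lam+1+s)) ((E ^ s) v)) := Finset.sum_add_distrib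
        _ = (∑ s ∈ Finset.range N, coB q lam s • ((F ^ (lam+2+s)) ((E ^ (s+1)) v)))
              + ∑ s ∈ Finset.range (N+1),
                  (coB q lam s * (qintN q (lam+2+s) * qintN q (s+1))) •
                    ((F ^ (lam+1+s)) ((E ^ s) v)) := by
            rw [Finset.sum_range_succ
              (fun s => coB q lam s • ((F ^ (lam+2+s)) ((E ^ (s+1)) v))) N,
              hEN1, map_zero, smul_zero, add_zero]
        _ = ∑ s ∈ Finset.range (N+1), coD q lam s • ((F ^ (lam+1+s)) ((E ^ s) v)) := by
            rw [Finset.sum_range_succ'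
              (fun s => coD q lam s • ((F ^ (lam+1+s)) ((E ^ s) v))) N,
              Finset.sum_range_succ'
              (fun s => (coB q lam s * (qintN q (lam+2+s) * qintN q (s+1))) •
                ((F ^ (lam+1+s)) ((E ^ s) v))) N,
              ← add_assoc, ← Finset.sum_add_distrib]
            congr 1
            · refine Finset.sum_congr rfl fun s _ => ?_
              rw [show lam+2+s = lam+1+(s+1) by omega, ← add_smul]
              congr 1
              exact (coef3' q hqint hq lam s).symm
            · congr 1
              exact (coef2' q hqint hq lam).symm
    rw [claimL, claimR, Finset.smul_sum]
    refine Finset.sum_congr rfl fun s _ => ?_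
    rw [smul_smul]
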